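/- Let R be a commutative noetherian ring and let 𝒞 be a subcategory of the category of finitely generated R-modules that is closed under images and extensions (i.e., an IE-closed subcategory). Then 𝒞 is closed under submodules; in particular, 𝒞 is a torsion-free class. -/

import Mathlib

/-!
STATEMENT 0: Let `R` be a commutative noetherian ring and let `𝒞` be a subcategory of the
category of finitely generated `R`-modules that is closed under images and extensions
(i.e., an IE-closed subcategory). Then `𝒞` is closed under submodules; in particular,
`𝒞` is a torsion-free class.
-/

universe u

section Defs

variable (A : Type u) [Ring A]

/-- `C` is a subcategory of `mod A`: it is closed under isomorphisms, contains the zero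
modules, and consists of finitely generated modules. -/
def IsModSubcat (C : Set (ModuleCat.{u} A)) : Prop :=
  (∀ M N : ModuleCat.{u} A, (M ≃ₗ[A] N) → M ∈ C → N ∈ C) ∧
  (∀ M : ModuleCat.{u} A, Subsingleton M → M ∈ C) ∧
  (∀ M ∈ C, Module.Finite A M)

/-- `C` is closed under submodules. -/
def SubmoduleClosed (C : Set (ModuleCat.{u} A)) : Prop :=
  ∀ M ∈ C, ∀ N : Submodule A M, ModuleCat.of A N ∈ C

/-- `C` is closed under images: for every `A`-linear map `f : C₁ → C₂` with `C₁, C₂ ∈ C`,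
the image of `f` belongs to `C`. -/
def ImagesClosed (C : Set (ModuleCat.{u} A)) : Prop :=
  ∀ M₁ ∈ C, ∀ M₂ ∈ C, ∀ f : M₁ →ₗ[A] M₂, ModuleCat.of A (LinearMap.range f) ∈ C

/-- `C` is closed under extensions: for every short exact sequence
`0 → L → M → N → 0` of finitely generated modules with `L, N ∈ C`, we have `M ∈ C`. -/
def ExtClosed (C : Set (ModuleCat.{u} A)) : Prop :=
  ∀ (L M N : ModuleCat.{u} A), Module.Finite A M →
    ∀ (f : L →ₗ[A] M) (g : M →ₗ[A] N),
      Function.Injective f → Function.Surjective g →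
      LinearMap.range f = LinearMap.ker g →
      L ∈ C → N ∈ C → M ∈ C

end Defs

namespace IETF
set_option linter.unusedSectionVars false
set_option maxHeartbeats 1000000

open LinearMap Submodule

variable {R : Type u} [CommRing R] [IsNoetherianRing R]
variable {C : Set (ModuleCat.{u} R)}

section Basic

variable (hC : IsModSubcat R C) (him : ImagesClosed R C) (hext : ExtClosed R C)
include hC him hext

lemma cIso {A B : Type u} [AddCommGroup A] [Module R A] [AddCommGroup B] [Module R B]
    (h : ModuleCat.of R A ∈ C) (e : A ≃ₗ[R] B) : ModuleCat.of R B ∈ C :=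
  hC.1 (ModuleCat.of R A) (ModuleCat.of R B) e h

lemma cZero (A : Type u) [AddCommGroup A] [Module R A] [hs : Subsingleton A] :
    ModuleCat.of R A ∈ C :=
  hC.2.1 (ModuleCat.of R A) hs

lemma cFin {A : Type u} [AddCommGroup A] [Module R A] (h : ModuleCat.of R A ∈ C) :
    Module.Finite R A :=
  hC.2.2 (ModuleCat.of R A) h

lemma cImg {A B : Type u} [AddCommGroup A] [Module R A] [AddCommGroup B] [Module R B]
    (hA : ModuleCat.of R A ∈ C) (hB : ModuleCat.of R B ∈ C) (f : A →ₗ[R] B) :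
    ModuleCat.of R ↥(LinearMap.range f) ∈ C :=
  him (ModuleCat.of R A) hA (ModuleCat.of R B) hB f

lemma cExt {A B X : Type u} [AddCommGroup A] [Module R A] [AddCommGroup B] [Module R B]
    [AddCommGroup X] [Module R X] [hX : Module.Finite R X]
    (hA : ModuleCat.of R A ∈ C) (hB : ModuleCat.of R B ∈ C)
    (f : A →ₗ[R] X) (g : X →ₗ[R] B) (hf : Function.Injective f)
    (hg : Function.Surjective g) (hfg : LinearMap.range f = LinearMap.ker g) :
    ModuleCat.of R X ∈ C :=
  hext (ModuleCat.of R A) (ModuleCat.of R X) (ModuleCat.of R B) hX f g hf hg hfg hA hB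

lemma cBot {X : Type u} [AddCommGroup X] [Module R X] {N : Submodule R X} (hN : N = ⊥) :
    ModuleCat.of R ↥N ∈ C := by
  haveI : Subsingleton ↥N := by rw [hN]; infer_instance
  exact cZero hC him hext ↥N

lemma cProd {A B : Type u} [AddCommGroup A] [Module R A] [AddCommGroup B] [Module R B]
    (hA : ModuleCat.of R A ∈ C) (hB : ModuleCat.of R B ∈ C) :
    ModuleCat.of R (A × B) ∈ C := by
  haveI : Module.Finite R A := cFin hC him hext hA
  haveI : Module.Finite R B := cFin hC him hext hB
  exact cExt hC him hext hA hB (LinearMap.inl R A B) (LinearMap.snd R A B)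
    LinearMap.inl_injective LinearMap.snd_surjective (LinearMap.range_inl R A B)

lemma cSup {X : Type u} [AddCommGroup X] [Module R X] (hX : ModuleCat.of R X ∈ C)
    {A B : Submodule R X} (hA : ModuleCat.of R ↥A ∈ C) (hB : ModuleCat.of R ↥B ∈ C) :
    ModuleCat.of R ↥(A ⊔ B) ∈ C := by
  have h := cImg hC him hext (cProd hC him hext hA hB) hX (A.subtype.coprod B.subtype)
  rw [LinearMap.range_coprod, Submodule.range_subtype, Submodule.range_subtype] at h
  exact h

end Basic

/-- Determinant trick: if `s • V ⊆ J • V` then `(s ^ n + c) • V = 0` for some `c ∈ J`. -/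
lemma smul_sub_mem_aux {V : Type u} [AddCommGroup V] [Module R V] [Module.Finite R V]
    (J : Ideal R) (s : R) (h : ∀ v : V, s • v ∈ J • (⊤ : Submodule R V)) :
    ∃ (n : ℕ) (c : R), c ∈ J ∧ ∀ v : V, (s ^ n + c) • v = 0 := by
  have hrange : LinearMap.range (s • (LinearMap.id : V →ₗ[R] V)) ≤ J • ⊤ := by
    rintro y ⟨v, rfl⟩
    simpa using h v
  obtain ⟨P, hPmonic, -, hPcoeff, hPev⟩ :=
    LinearMap.exists_monic_and_coeff_mem_pow_and_aeval_eq_zero_of_range_le_smul R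
      (s • (LinearMap.id : V →ₗ[R] V)) J hrange
  have hs_id : (s • (LinearMap.id : V →ₗ[R] V)) = algebraMap R (Module.End R V) s := by
    rw [Module.algebraMap_end_eq_smul_id]
  rw [hs_id, Polynomial.aeval_algebraMap_apply] at hPev
  have hev0 : algebraMap R (Module.End R V) (P.eval s) = 0 := hPev
  have hkill : ∀ v : V, (P.eval s) • v = 0 := by
    intro v
    have := congrArg (fun (φ : Module.End R V) => φ v) hev0
    simpa [Module.algebraMap_end_eq_smul_id] using this
  set n := P.natDegree with hn
  refine ⟨n, P.eval s - s ^ n, ?_, ?_⟩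
  · have hsum : P.eval s = (∑ i ∈ Finset.range n, P.coeff i * s ^ i) + P.coeff n * s ^ n := by
      rw [Polynomial.eval_eq_sum_range, Finset.sum_range_succ]
    have hcn : P.coeff n = 1 := hPmonic.coeff_natDegree
    have : P.eval s - s ^ n = ∑ i ∈ Finset.range n, P.coeff i * s ^ i := by
      rw [hsum, hcn, one_mul]; ring
    rw [this]
    refine Ideal.sum_mem J ?_
    intro i hi
    have hin : i < n := Finset.mem_range.mp hi
    have hcoef : P.coeff i ∈ J ^ (n - i) := hPcoeff i
    have : J ^ (n - i) ≤ J := Ideal.pow_le_self (Nat.sub_ne_zero_of_lt hin)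
    exact Ideal.mul_mem_right _ J (this hcoef)
  · intro v
    have : s ^ n + (P.eval s - s ^ n) = P.eval s := by ring
    rw [this]
    exact hkill v

lemma faithful_aux {V : Type u} [AddCommGroup V] [Module R V] [Module.Finite R V]
    {p q : Ideal R} (hq : q.IsPrime) (hpq : p ≤ q) (ξ : V)
    (hξ : ∀ r : R, r • ξ = 0 → r ∈ p) (s : R)
    (hs : ∀ v : V, s • v ∈ q • (⊤ : Submodule R V)) : s ∈ q := by
  obtain ⟨n, c, hcJ, hkill⟩ := smul_sub_mem_aux q s hs
  have h1 : s ^ n + c ∈ p := hξ _ (hkill ξ)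
  have h2 : s ^ n ∈ q := by
    have := q.sub_mem (hpq h1) hcJ
    simpa using this
  exact hq.mem_of_pow_mem n h2

/-- A finitely generated faithful module over a domain admits a nonzero functional. -/
lemma hom_to_domain (E : Type u) [CommRing E] [IsDomain E] (T : Type u) [AddCommGroup T]
    [Module E T] [Module.Finite E T]
    (hfaith : ∀ e : E, (∀ v : T, e • v = 0) → e = 0) :
    ∃ φ : T →ₗ[E] E, φ ≠ 0 := by
  classical
  -- find an element with trivial annihilator
  have hex : ∃ t : T, ∀ e : E, e • t = 0 → e = 0 := by
    by_contra hne
    push_neg at hne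
    choose e he hne0 using hne
    obtain ⟨s, hs⟩ := Module.Finite.fg_top (R := E) (M := T)
    set P : E := ∏ v ∈ s, e v with hP
    have hPne : P ≠ 0 := Finset.prod_ne_zero_iff.mpr fun v _ => hne0 v
    have hPkill : ∀ v : T, P • v = 0 := by
      have hsub : (⊤ : Submodule E T) ≤ LinearMap.ker (LinearMap.lsmul E T P) := by
        rw [← hs, Submodule.span_le]
        intro v hv
        simp only [SetLike.mem_coe, LinearMap.mem_ker, LinearMap.lsmul_apply]
        calc P • v = ((∏ w ∈ s.erase v, e w) * e v) • v := by
              rw [mul_comm, Finset.mul_prod_erase s e hv]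
          _ = (∏ w ∈ s.erase v, e w) • (e v • v) := by rw [mul_smul]
          _ = 0 := by rw [he v, smul_zero]
      intro v
      simpa using hsub (Submodule.mem_top (x := v))
    exact hPne (hfaith P hPkill)
  obtain ⟨t, ht⟩ := hex
  -- base functional on `span {t}`
  have hinj : Function.Injective (LinearMap.toSpanSingleton E T t) := by
    rw [← LinearMap.ker_eq_bot, LinearMap.ker_eq_bot']
    intro m hm
    exact ht m hm
  let c : ↥(Submodule.span E {t}) ≃ₗ[E] ↥(LinearMap.range (LinearMap.toSpanSingleton E T t)) :=
    LinearEquiv.ofEq _ _ (LinearMap.span_singleton_eq_range E T t)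
  let e₀ : E ≃ₗ[E] ↥(LinearMap.range (LinearMap.toSpanSingleton E T t)) :=
    LinearEquiv.ofInjective _ hinj
  have htmem : t ∈ Submodule.span E {t} := Submodule.mem_span_singleton_self t
  let φ₀ : ↥(Submodule.span E {t}) →ₗ[E] E := (e₀.symm.toLinearMap).comp c.toLinearMap
  have hφ₀ : φ₀ ⟨t, htmem⟩ ≠ 0 := by
    have : φ₀ ⟨t, htmem⟩ = 1 := by
      show e₀.symm (c ⟨t, htmem⟩) = 1
      rw [LinearEquiv.symm_apply_eq]
      apply Subtype.ext
      show t = (LinearMap.toSpanSingleton E T t) 1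
      simp
    rw [this]; exact one_ne_zero
  -- extension step
  have step : ∀ (U : Submodule E T) (htU : t ∈ U) (φ : ↥U →ₗ[E] E),
      φ ⟨t, htU⟩ ≠ 0 → ∀ u : T, ∃ (U' : Submodule E T) (htU' : t ∈ U')
        (φ' : ↥U' →ₗ[E] E), U ⊔ Submodule.span E {u} ≤ U' ∧ φ' ⟨t, htU'⟩ ≠ 0 := by
    intro U htU φ hφ u
    by_cases hJ : ∃ s : E, s ≠ 0 ∧ s • u ∈ U
    · obtain ⟨s, hs0, hsu⟩ := hJ
      set U' := U ⊔ Submodule.span E {u} with hU'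
      have htU' : t ∈ U' := Submodule.mem_sup_left htU
      have hsU' : ∀ w ∈ U', s • w ∈ U := by
        intro w hw
        rw [hU', Submodule.mem_sup] at hw
        obtain ⟨a, ha, b, hb, rfl⟩ := hw
        obtain ⟨cc, rfl⟩ := Submodule.mem_span_singleton.mp hb
        rw [smul_add]
        refine U.add_mem (U.smul_mem s ha) ?_
        rw [smul_comm]
        exact U.smul_mem cc hsu
      let m : ↥U' →ₗ[E] ↥U :=
        (LinearMap.lsmul E T s).restrict (p := U') (q := U) (fun w hw => hsU' w hw)
      refine ⟨U', htU', φ.comp m, le_of_eq hU'.symm, ?_⟩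
      have hmt : m ⟨t, htU'⟩ = ⟨s • t, U.smul_mem s htU⟩ := rfl
      have : (φ.comp m) ⟨t, htU'⟩ = s • φ ⟨t, htU⟩ := by
        rw [LinearMap.comp_apply, hmt]
        have : (⟨s • t, U.smul_mem s htU⟩ : ↥U) = s • ⟨t, htU⟩ := rfl
        rw [this, map_smul]
      rw [this, smul_eq_mul]
      exact mul_ne_zero hs0 hφ
    · push_neg at hJ
      set U' := U ⊔ Submodule.span E {u} with hU'
      have htU' : t ∈ U' := Submodule.mem_sup_left htU
      -- U' ≃ U × span {u}
      let g : (↥U × ↥(Submodule.span E {u})) →ₗ[E] T := U.subtype.coprod (Submodule.span E {u}).subtype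
      have hgr : LinearMap.range g = U' := by
        rw [LinearMap.range_coprod, Submodule.range_subtype, Submodule.range_subtype]
      let g' : (↥U × ↥(Submodule.span E {u})) →ₗ[E] ↥U' :=
        g.codRestrict U' (fun w => by rw [← hgr]; exact LinearMap.mem_range_self g w)
      have hg'bij : Function.Bijective g' := by
        constructor
        · intro w₁ w₂ hww
          have hval : g w₁ = g w₂ := congrArg Subtype.val hww
          have hsum : (w₁.1 : T) + (w₁.2 : T) = (w₂.1 : T) + (w₂.2 : T) := hval
          obtain ⟨c₁, hc₁⟩ := Submodule.mem_span_singleton.mp w₁.2.2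
          obtain ⟨c₂, hc₂⟩ := Submodule.mem_span_singleton.mp w₂.2.2
          have hdiff : (c₁ - c₂) • u = (w₂.1 : T) - (w₁.1 : T) := by
            rw [sub_smul, hc₁, hc₂]
            have := hsum
            linear_combination (norm := module) this
          have hmem : (c₁ - c₂) • u ∈ U := by
            rw [hdiff]; exact U.sub_mem w₂.1.2 w₁.1.2
          have hc : c₁ - c₂ = 0 := by
            by_contra hcc
            exact hJ (c₁ - c₂) hcc hmem
          have hceq : c₁ = c₂ := sub_eq_zero.mp hc
          have h2 : (w₁.2 : T) = (w₂.2 : T) := by rw [← hc₁, ← hc₂, hceq]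
          have h1 : (w₁.1 : T) = (w₂.1 : T) := by
            have := hsum
            rw [h2] at this
            exact add_right_cancel this
          exact Prod.ext (Subtype.ext h1) (Subtype.ext h2)
        · rintro ⟨w, hw⟩
          rw [hU', Submodule.mem_sup] at hw
          obtain ⟨a, ha, b, hb, rfl⟩ := hw
          exact ⟨(⟨a, ha⟩, ⟨b, hb⟩), rfl⟩
      let eU : (↥U × ↥(Submodule.span E {u})) ≃ₗ[E] ↥U' := LinearEquiv.ofBijective g' hg'bij
      let φ' : ↥U' →ₗ[E] E := (φ.comp (LinearMap.fst E ↥U ↥(Submodule.span E {u}))).comp eU.symm.toLinearMap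
      refine ⟨U', htU', φ', le_of_eq hU'.symm, ?_⟩
      have heq : eU (⟨t, htU⟩, 0) = ⟨t, htU'⟩ := by
        apply Subtype.ext
        show (t : T) + ((0 : ↥(Submodule.span E {u})) : T) = t
        simp
      have : eU.symm ⟨t, htU'⟩ = (⟨t, htU⟩, 0) := by
        rw [LinearEquiv.symm_apply_eq, heq]
      show (φ.comp (LinearMap.fst E ↥U ↥(Submodule.span E {u}))) (eU.symm ⟨t, htU'⟩) ≠ 0
      rw [this]
      simpa using hφ
  -- iterate over a generating list
  have key : ∀ (l : List T) (U : Submodule E T) (htU : t ∈ U) (φ : ↥U →ₗ[E] E),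
      φ ⟨t, htU⟩ ≠ 0 → ∃ (U' : Submodule E T) (htU' : t ∈ U') (φ' : ↥U' →ₗ[E] E),
        U ⊔ Submodule.span E {v | v ∈ l} ≤ U' ∧ φ' ⟨t, htU'⟩ ≠ 0 := by
    intro l
    induction l with
    | nil =>
      intro U htU φ hφ
      refine ⟨U, htU, φ, ?_, hφ⟩
      have h0 : ({v | v ∈ ([] : List T)} : Set T) = ∅ := by simp
      rw [h0, Submodule.span_empty, sup_bot_eq]
    | cons u l ih =>
      intro U htU φ hφ
      obtain ⟨U₁, htU₁, φ₁, hle₁, hφ₁⟩ := step U htU φ hφ u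
      obtain ⟨U', htU', φ', hle', hφ'⟩ := ih U₁ htU₁ φ₁ hφ₁
      refine ⟨U', htU', φ', ?_, hφ'⟩
      have hins : ({v | v ∈ u :: l} : Set T) = insert u {v | v ∈ l} := by
        ext w; simp
      rw [hins, Submodule.span_insert, ← sup_assoc]
      exact sup_le (le_trans hle₁ (le_trans le_sup_left hle')) (le_trans le_sup_right hle')
  obtain ⟨sgen, hsgen⟩ := Module.Finite.fg_top (R := E) (M := T)
  obtain ⟨U', htU', φ', hle', hφ'⟩ := key sgen.toList (Submodule.span E {t}) htmem φ₀ hφ₀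
  have hU'top : U' = ⊤ := by
    have h1 : ({v | v ∈ sgen.toList} : Set T) = ↑sgen := by
      ext w; simp [Finset.mem_toList]
    have h2 : (⊤ : Submodule E T) ≤ U' := by
      rw [← hsgen, ← h1]
      exact le_trans le_sup_right hle'
    exact top_unique h2
  let inc : T →ₗ[E] ↥U' := LinearMap.codRestrict U' LinearMap.id (fun v => by
    rw [hU'top]; trivial)
  refine ⟨φ'.comp inc, fun h0 => hφ' ?_⟩
  have : φ' ⟨t, htU'⟩ = (φ'.comp inc) t := rfl
  rw [this, h0]
  rfl


/-- From a module with an element whose annihilator is contained in the prime `p ≤ q`,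
construct a nonzero map to `R ⧸ q`. -/
lemma exists_lin_to_quot {V : Type u} [AddCommGroup V] [Module R V] [Module.Finite R V]
    {p q : Ideal R} (hp : p.IsPrime) (hq : q.IsPrime) (hpq : p ≤ q) (ξ : V)
    (hξ : ∀ r : R, r • ξ = 0 → r ∈ p) :
    ∃ ψ : V →ₗ[R] (R ⧸ q), ψ ≠ 0 := by
  haveI tower : IsScalarTower R (R ⧸ q) (V ⧸ (q • ⊤ : Submodule R V)) :=
    Module.IsTorsionBySet.isScalarTower (Module.isTorsionBySet_quotient_ideal_smul V q)
  haveI : Module.Finite R (V ⧸ (q • ⊤ : Submodule R V)) :=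
    Module.Finite.of_surjective (q • ⊤ : Submodule R V).mkQ (Submodule.Quotient.mk_surjective _)
  haveI : Module.Finite (R ⧸ q) (V ⧸ (q • ⊤ : Submodule R V)) :=
    Module.Finite.of_restrictScalars_finite R (R ⧸ q) _
  haveI : IsDomain (R ⧸ q) := Ideal.Quotient.isDomain q
  have hfaith : ∀ d : R ⧸ q, (∀ v : V ⧸ (q • ⊤ : Submodule R V), d • v = 0) → d = 0 := by
    intro d hd
    obtain ⟨s, rfl⟩ := Ideal.Quotient.mk_surjective d
    rw [Ideal.Quotient.eq_zero_iff_mem]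
    refine faithful_aux hq hpq ξ hξ s ?_
    intro v
    have h1 := hd (Submodule.Quotient.mk v)
    rw [Module.Quotient.mk_smul_mk] at h1
    exact (Submodule.Quotient.mk_eq_zero _).mp h1
  obtain ⟨φ, hφ⟩ := hom_to_domain (R ⧸ q) (V ⧸ (q • ⊤ : Submodule R V)) hfaith
  refine ⟨(φ.restrictScalars R).comp (q • ⊤ : Submodule R V).mkQ, ?_⟩
  intro h0
  apply hφ
  apply LinearMap.ext
  intro v
  obtain ⟨m, rfl⟩ := Submodule.Quotient.mk_surjective _ v
  have h1 : ((φ.restrictScalars R).comp (q • ⊤ : Submodule R V).mkQ) m = 0 := by rw [h0]; rfl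
  simpa using h1



section Main

variable (hC : IsModSubcat R C) (him : ImagesClosed R C) (hext : ExtClosed R C)
include hC him hext

lemma prime_case (I : Ideal R)
    (IH : ∀ J : Ideal R, J > I → ∀ (X : ModuleCat.{u} R), X ∈ C → ∀ x : ↥X,
      LinearMap.ker (LinearMap.toSpanSingleton R ↥X x) = J →
      ModuleCat.of R ↥(LinearMap.range (LinearMap.toSpanSingleton R ↥X x)) ∈ C)
    (X : ModuleCat.{u} R) (hX : X ∈ C) (x : ↥X)
    (hker : LinearMap.ker (LinearMap.toSpanSingleton R ↥X x) = I)
    (hprime : I.IsPrime) :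
    ModuleCat.of R ↥(LinearMap.range (LinearMap.toSpanSingleton R ↥X x)) ∈ C := by
  clear IH
  haveI : Module.Finite R ↥X := hC.2.2 X hX
  haveI : IsNoetherian R ↥X := isNoetherian_of_isNoetherianRing_of_finite R ↥X
  have wf : WellFounded ((· > ·) : Ideal R → Ideal R → Prop) := IsWellFounded.wf
  have hIle : (I : Submodule R R) ≤ LinearMap.ker (LinearMap.toSpanSingleton R ↥X x) :=
    le_of_eq hker.symm
  set θbar : (R ⧸ (I : Submodule R R)) →ₗ[R] ↥X :=
    Submodule.liftQ (I : Submodule R R) (LinearMap.toSpanSingleton R ↥X x) hIle with hθbar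
  have hθbar_inj : Function.Injective θbar := by
    rw [← LinearMap.ker_eq_bot, hθbar]
    exact Submodule.ker_liftQ_eq_bot _ _ _ (le_of_eq hker)
  -- bridge : mapping ideals through the quotient
  have hbridge : ∀ K : Ideal R,
      Submodule.map θbar (Submodule.map (I : Submodule R R).mkQ (K : Submodule R R)) =
        Submodule.map (LinearMap.toSpanSingleton R ↥X x) (K : Submodule R R) := by
    intro K
    rw [← Submodule.map_comp, hθbar, Submodule.liftQ_mkQ]
  have hxann : ∀ r : R, r • x = 0 → r ∈ I := by
    intro r hr
    rw [← hker]
    exact hr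
  -- the seed : a nonzero map `X → R ⧸ I` gives a realized ideal strictly above `I`
  obtain ⟨ψ', hψ'⟩ := exists_lin_to_quot (p := I) (q := I) hprime hprime le_rfl x hxann
  have hψ₀C : ModuleCat.of R
      ↥(LinearMap.range ((θbar : (R ⧸ (I : Submodule R R)) →ₗ[R] ↥X).comp ψ')) ∈ C :=
    cImg hC him hext hX hX (θbar.comp ψ')
  set K₀ : Ideal R := Submodule.comap ((I : Submodule R R).mkQ) (LinearMap.range ψ') with hK₀
  have hK₀map : Submodule.map (I : Submodule R R).mkQ (K₀ : Submodule R R) =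
      LinearMap.range ψ' := by
    rw [hK₀, Submodule.map_comap_eq, Submodule.range_mkQ, top_inf_eq]
  have hrange₀ : LinearMap.range (θbar.comp ψ') =
      Submodule.map (LinearMap.toSpanSingleton R ↥X x) (K₀ : Submodule R R) := by
    rw [LinearMap.range_comp, ← hK₀map, hbridge]
  have hIK₀ : I < K₀ := by
    have hle : I ≤ K₀ := by
      intro r hr
      show (I : Submodule R R).mkQ r ∈ LinearMap.range ψ'
      have h0 : (I : Submodule R R).mkQ r = 0 := by
        rw [Submodule.mkQ_apply, Submodule.Quotient.mk_eq_zero]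
        exact hr
      rw [h0]
      exact Submodule.zero_mem _
    obtain ⟨v, hv⟩ := DFunLike.ne_iff.mp hψ'
    obtain ⟨r₀, hr₀⟩ := Submodule.Quotient.mk_surjective (I : Submodule R R) (ψ' v)
    have hr₀K₀ : r₀ ∈ K₀ := by
      show (I : Submodule R R).mkQ r₀ ∈ LinearMap.range ψ'
      rw [Submodule.mkQ_apply, hr₀]
      exact ⟨v, rfl⟩
    have hr₀I : r₀ ∉ I := by
      intro hmem
      apply hv
      rw [← hr₀]
      exact (Submodule.Quotient.mk_eq_zero _).mpr hmem
    exact lt_of_le_of_ne hle (fun he => hr₀I (he ▸ hr₀K₀))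
  -- the set of realized ideals strictly above `I`
  set SS : Set (Ideal R) := {K | I < K ∧
    ModuleCat.of R ↥(Submodule.map (LinearMap.toSpanSingleton R ↥X x) (K : Submodule R R)) ∈ C}
    with hSS
  have hK₀SS : K₀ ∈ SS := ⟨hIK₀, by rw [← hrange₀]; exact hψ₀C⟩
  obtain ⟨K, hKSS, hKmax⟩ := wf.has_min SS ⟨K₀, hK₀SS⟩
  -- main claim : the maximal realized ideal is `⊤`
  have hKtop : K = ⊤ := by
    by_contra hKt
    haveI : Nontrivial (R ⧸ K) := Ideal.Quotient.nontrivial_iff.mpr hKt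
    obtain ⟨q, hq⟩ := associatedPrimes.nonempty R (R ⧸ K)
    obtain ⟨hqprime, y, hy⟩ := isAssociatedPrime_iff.mp hq
    have hyann : ∀ r : R, r ∈ q ↔ r • y = 0 := by
      intro r
      rw [hy, Submodule.mem_colon_singleton, Submodule.mem_bot]
    have hKq : K ≤ q := by
      intro r hr
      rw [hyann]
      obtain ⟨u, rfl⟩ := Submodule.Quotient.mk_surjective (K : Submodule R R) y
      rw [← Submodule.Quotient.mk_smul, Submodule.Quotient.mk_eq_zero, smul_eq_mul]
      exact K.mul_mem_right u hr
    have hIq : I ≤ q := le_trans (le_of_lt hKSS.1) hKq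
    obtain ⟨k, hkK, hknotI⟩ := SetLike.exists_of_lt hKSS.1
    -- the realized module `W` with its special element
    set W : Submodule R ↥X :=
      Submodule.map (LinearMap.toSpanSingleton R ↥X x) (K : Submodule R R) with hW
    haveI : Module.Finite R ↥W := Module.Finite.iff_fg.mpr (IsNoetherian.noetherian _)
    set ξ : ↥W := ⟨k • x, ⟨k, hkK, rfl⟩⟩ with hξdef
    have hξ : ∀ r : R, r • ξ = 0 → r ∈ I := by
      intro r hr
      have h1 : r • (k • x) = 0 := congrArg Subtype.val hr
      have h2 : (r * k) • x = 0 := by rw [← smul_smul]; exact h1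
      have h3 : r * k ∈ I := hxann _ h2
      exact (hprime.mem_or_mem h3).resolve_right hknotI
    obtain ⟨ψ₁', hψ₁'⟩ := exists_lin_to_quot (p := I) (q := q) hprime hqprime hIq ξ hξ
    -- multiplication by `y` embeds `R ⧸ q` into `R ⧸ K`
    have hqle : (q : Submodule R R) ≤
        LinearMap.ker (LinearMap.toSpanSingleton R (R ⧸ (K : Submodule R R)) y) := by
      intro r hr
      show r • y = 0
      exact (hyann r).mp hr
    set mulY : (R ⧸ (q : Submodule R R)) →ₗ[R] (R ⧸ (K : Submodule R R)) :=
      Submodule.liftQ (q : Submodule R R)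
        (LinearMap.toSpanSingleton R (R ⧸ (K : Submodule R R)) y) hqle with hmulY
    have hmulY_inj : Function.Injective mulY := by
      rw [← LinearMap.ker_eq_bot, LinearMap.ker_eq_bot']
      intro z hz
      obtain ⟨r, rfl⟩ := Submodule.Quotient.mk_surjective (q : Submodule R R) z
      have h1 : r • y = 0 := hz
      rw [Submodule.Quotient.mk_eq_zero]
      exact (hyann r).mpr h1
    set ψ₁ : ↥W →ₗ[R] (R ⧸ (K : Submodule R R)) := mulY.comp ψ₁' with hψ₁def
    have hψ₁ne : ∃ w : ↥W, ψ₁ w ≠ 0 := by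
      obtain ⟨w, hw⟩ := DFunLike.ne_iff.mp hψ₁'
      refine ⟨w, fun h0 => hw ?_⟩
      have : mulY (ψ₁' w) = mulY 0 := by rw [map_zero]; exact h0
      exact hmulY_inj this
    -- the natural projection
    have hIKle : (I : Submodule R R) ≤ LinearMap.ker (K : Submodule R R).mkQ := by
      rw [Submodule.ker_mkQ]
      exact le_of_lt hKSS.1
    set π : (R ⧸ (I : Submodule R R)) →ₗ[R] (R ⧸ (K : Submodule R R)) :=
      Submodule.liftQ (I : Submodule R R) ((K : Submodule R R).mkQ) hIKle with hπ
    have hπsurj : Function.Surjective π := by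
      intro z
      obtain ⟨r, rfl⟩ := Submodule.Quotient.mk_surjective (K : Submodule R R) z
      exact ⟨Submodule.Quotient.mk r, rfl⟩
    have hπmk : ∀ r : R, π (Submodule.Quotient.mk r) = Submodule.Quotient.mk r := fun r => rfl
    have hπker : LinearMap.ker π = Submodule.map (I : Submodule R R).mkQ (K : Submodule R R) := by
      ext z
      constructor
      · intro hz
        obtain ⟨r, rfl⟩ := Submodule.Quotient.mk_surjective (I : Submodule R R) z
        have h1 : (Submodule.Quotient.mk r : R ⧸ (K : Submodule R R)) = 0 := hz
        rw [Submodule.Quotient.mk_eq_zero] at h1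
        exact ⟨r, h1, rfl⟩
      · rintro ⟨r, hrK, rfl⟩
        show π (Submodule.Quotient.mk r) = 0
        rw [hπmk, Submodule.Quotient.mk_eq_zero]
        exact hrK
    -- the pullback
    set Δ : (↥W × (R ⧸ (I : Submodule R R))) →ₗ[R] (R ⧸ (K : Submodule R R)) :=
      (ψ₁.comp (LinearMap.fst R ↥W (R ⧸ (I : Submodule R R)))) -
        (π.comp (LinearMap.snd R ↥W (R ⧸ (I : Submodule R R)))) with hΔ
    set Pb : Submodule R (↥W × (R ⧸ (I : Submodule R R))) := LinearMap.ker Δ with hPb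
    have hΔapply : ∀ w : ↥W, ∀ d : R ⧸ (I : Submodule R R), Δ (w, d) = ψ₁ w - π d := fun w d => rfl
    set g : ↥Pb →ₗ[R] ↥W := (LinearMap.fst R ↥W (R ⧸ (I : Submodule R R))).comp Pb.subtype with hgdef
    have hgsurj : Function.Surjective g := by
      intro w
      obtain ⟨d, hd⟩ := hπsurj (ψ₁ w)
      refine ⟨⟨(w, d), ?_⟩, rfl⟩
      show Δ (w, d) = 0
      rw [hΔapply, hd, sub_self]
    -- the kernel object
    set Kbar : Submodule R (R ⧸ (I : Submodule R R)) :=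
      Submodule.map (I : Submodule R R).mkQ (K : Submodule R R) with hKbar
    have hKbarC : ModuleCat.of R ↥Kbar ∈ C := by
      have h1 : ModuleCat.of R ↥(Submodule.map θbar Kbar) ∈ C := by
        rw [hKbar, hbridge K]
        exact hKSS.2
      exact cIso hC him hext h1 (Submodule.equivMapOfInjective θbar hθbar_inj Kbar).symm
    set f : ↥Kbar →ₗ[R] ↥Pb :=
      LinearMap.codRestrict Pb ((LinearMap.inr R ↥W (R ⧸ (I : Submodule R R))).comp Kbar.subtype)
        (fun d => by
          show Δ (0, (d : R ⧸ (I : Submodule R R))) = 0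
          rw [hΔapply, map_zero]
          have hd0 : π (d : R ⧸ (I : Submodule R R)) = 0 := by
            have hdk : (d : R ⧸ (I : Submodule R R)) ∈ LinearMap.ker π := by
              rw [hπker]; exact d.2
            exact hdk
          rw [hd0, sub_zero]) with hfdef
    have hfinj : Function.Injective f := by
      intro d₁ d₂ h
      have h1 : ((0 : ↥W), (d₁ : R ⧸ (I : Submodule R R))) =
          ((0 : ↥W), (d₂ : R ⧸ (I : Submodule R R))) := congrArg Subtype.val h
      exact Subtype.ext (congrArg Prod.snd h1)
    have hexact : LinearMap.range f = LinearMap.ker g := by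
      ext ⟨⟨w, d⟩, hwd⟩
      constructor
      · rintro ⟨⟨dv, hdm⟩, hfd⟩
        have h1 : ((0 : ↥W), dv) = (w, d) := congrArg Subtype.val hfd
        rw [LinearMap.mem_ker]
        show w = 0
        exact (congrArg Prod.fst h1).symm
      · intro hkg
        rw [LinearMap.mem_ker] at hkg
        have hw0 : w = 0 := hkg
        have hΔ0 : Δ (w, d) = 0 := hwd
        rw [hΔapply, hw0, map_zero, zero_sub, neg_eq_zero] at hΔ0
        have hdK : d ∈ Kbar := by rw [← hπker]; exact hΔ0
        refine ⟨⟨d, hdK⟩, ?_⟩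
        apply Subtype.ext
        show ((0 : ↥W), d) = (w, d)
        rw [hw0]
    haveI : Module.Finite R (R ⧸ (I : Submodule R R)) :=
      Module.Finite.of_surjective (I : Submodule R R).mkQ (Submodule.Quotient.mk_surjective _)
    haveI : IsNoetherian R (R ⧸ (I : Submodule R R)) :=
      isNoetherian_of_isNoetherianRing_of_finite R _
    haveI : IsNoetherian R ↥W := isNoetherian_of_isNoetherianRing_of_finite R ↥W
    haveI : Module.Finite R ↥Pb := Module.Finite.iff_fg.mpr (IsNoetherian.noetherian _)
    have hPbC : ModuleCat.of R ↥Pb ∈ C :=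
      cExt hC him hext hKbarC hKSS.2 f g hfinj hgsurj hexact
    -- image of the pullback in `X` : a bigger realized ideal
    set ρ : ↥Pb →ₗ[R] ↥X :=
      θbar.comp ((LinearMap.snd R ↥W (R ⧸ (I : Submodule R R))).comp Pb.subtype) with hρdef
    have hρC : ModuleCat.of R ↥(LinearMap.range ρ) ∈ C := cImg hC him hext hPbC hX ρ
    set K' : Ideal R := Submodule.comap ((K : Submodule R R).mkQ) (LinearMap.range ψ₁) with hK'
    have hsndPb : Submodule.map (LinearMap.snd R ↥W (R ⧸ (I : Submodule R R))) Pb =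
        Submodule.comap π (LinearMap.range ψ₁) := by
      ext d
      constructor
      · rintro ⟨⟨w, d'⟩, hmem, rfl⟩
        have h1 : Δ (w, d') = 0 := hmem
        rw [hΔapply] at h1
        exact ⟨w, by rw [sub_eq_zero] at h1; exact h1⟩
      · rintro ⟨w, hw⟩
        refine ⟨(w, d), ?_, rfl⟩
        show Δ (w, d) = 0
        rw [hΔapply, hw, sub_self]
    have hmapK' : Submodule.map (I : Submodule R R).mkQ (K' : Submodule R R) =
        Submodule.comap π (LinearMap.range ψ₁) := by
      ext z
      constructor
      · rintro ⟨r, hrK', rfl⟩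
        exact hrK'
      · intro hz
        obtain ⟨r, rfl⟩ := Submodule.Quotient.mk_surjective (I : Submodule R R) z
        exact ⟨r, hz, rfl⟩
    have hK'range : LinearMap.range ρ =
        Submodule.map (LinearMap.toSpanSingleton R ↥X x) (K' : Submodule R R) := by
      rw [hρdef, LinearMap.range_comp, LinearMap.range_comp, Submodule.range_subtype,
        ← hbridge K', hmapK', hsndPb]
    -- `K'` strictly contains `K`
    obtain ⟨w₀, hw₀⟩ := hψ₁ne
    obtain ⟨r₀, hr₀⟩ := Submodule.Quotient.mk_surjective (K : Submodule R R) (ψ₁ w₀)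
    have hKK' : K < K' := by
      have hle : K ≤ K' := by
        intro r hr
        show (K : Submodule R R).mkQ r ∈ LinearMap.range ψ₁
        have h0 : (K : Submodule R R).mkQ r = 0 := by
          rw [Submodule.mkQ_apply, Submodule.Quotient.mk_eq_zero]
          exact hr
        rw [h0]
        exact Submodule.zero_mem _
      have hr₀K' : r₀ ∈ K' := by
        show (K : Submodule R R).mkQ r₀ ∈ LinearMap.range ψ₁
        rw [Submodule.mkQ_apply, hr₀]
        exact ⟨w₀, rfl⟩
      have hr₀K : r₀ ∉ K := by
        intro hmem
        apply hw₀
        rw [← hr₀]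
        exact (Submodule.Quotient.mk_eq_zero _).mpr hmem
      exact lt_of_le_of_ne hle (fun he => hr₀K (he ▸ hr₀K'))
    have hK'SS : K' ∈ SS := ⟨lt_trans hKSS.1 hKK', by rw [← hK'range]; exact hρC⟩
    exact hKmax K' hK'SS hKK'
  -- conclusion
  have hfin := hKSS.2
  rw [hKtop] at hfin
  have htopmap : Submodule.map (LinearMap.toSpanSingleton R ↥X x) ((⊤ : Ideal R) : Submodule R R) =
      LinearMap.range (LinearMap.toSpanSingleton R ↥X x) := Submodule.map_top _
  rw [htopmap] at hfin
  exact hfin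

lemma cyclic_mem (X : ModuleCat.{u} R) (hX : X ∈ C) (x : ↥X) :
    ModuleCat.of R ↥(LinearMap.range (LinearMap.toSpanSingleton R ↥X x)) ∈ C := by
  have wf : WellFounded ((· > ·) : Ideal R → Ideal R → Prop) := IsWellFounded.wf
  let P : Ideal R → Prop := fun I => ∀ (X : ModuleCat.{u} R), X ∈ C → ∀ x : ↥X,
      LinearMap.ker (LinearMap.toSpanSingleton R ↥X x) = I →
      ModuleCat.of R ↥(LinearMap.range (LinearMap.toSpanSingleton R ↥X x)) ∈ C
  suffices H : ∀ I : Ideal R, P I by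
    exact H _ X hX x rfl
  intro I
  refine wf.induction (C := P) I ?_
  clear X hX x I
  intro I IH X hX x hker
  haveI : Module.Finite R ↥X := hC.2.2 X hX
  haveI : IsNoetherian R ↥X := isNoetherian_of_isNoetherianRing_of_finite R ↥X
  by_cases htop : I = ⊤
  · -- `x = 0`
    have hx0 : x = (0 : ↥X) := by
      have h1 : (1 : R) ∈ LinearMap.ker (LinearMap.toSpanSingleton R ↥X x) := by
        rw [hker, htop]; trivial
      have h2 : (1 : R) • x = 0 := h1
      rwa [one_smul] at h2
    refine cBot hC him hext ?_
    rw [hx0, LinearMap.toSpanSingleton_zero, LinearMap.range_zero]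
  by_cases hprime : I.IsPrime
  · exact prime_case hC him hext I IH X hX x hker hprime
  -- non-prime case
  rw [Ideal.isPrime_iff, not_and_or] at hprime
  rcases hprime with h | h
  · exact absurd htop (by simpa using h)
  push_neg at h
  obtain ⟨a, b, hab, ha, hb⟩ := h
  have hIa_le : I ≤ LinearMap.ker (LinearMap.toSpanSingleton R ↥X (a • x)) := by
    intro r hr
    have hmem : r * a ∈ LinearMap.ker (LinearMap.toSpanSingleton R ↥X x) := by
      rw [hker]; exact I.mul_mem_right a hr
    have h2 : (r * a) • x = 0 := hmem
    show r • (a • x) = 0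
    rw [smul_smul, h2]
  have hb_mem : b ∈ LinearMap.ker (LinearMap.toSpanSingleton R ↥X (a • x)) := by
    have hmem : a * b ∈ LinearMap.ker (LinearMap.toSpanSingleton R ↥X x) := by
      rw [hker]; exact hab
    have h1 : (a * b) • x = 0 := hmem
    show b • (a • x) = 0
    rw [smul_smul, mul_comm b a, h1]
  have hlt : LinearMap.ker (LinearMap.toSpanSingleton R ↥X (a • x)) > I :=
    lt_of_le_of_ne hIa_le (fun he => hb (by rw [he]; exact hb_mem))
  have hax : ModuleCat.of R ↥(LinearMap.range (LinearMap.toSpanSingleton R ↥X (a • x))) ∈ C :=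
    IH _ hlt X hX (a • x) rfl
  set J : Ideal R := LinearMap.ker (LinearMap.toSpanSingleton R ↥X (a • x)) with hJdef
  -- cyclic pieces of `Jx`
  have hcyc : ∀ c : R, c ∈ J → ModuleCat.of R
      ↥(Submodule.map (LinearMap.toSpanSingleton R ↥X x) (Submodule.span R {c})) ∈ C := by
    intro c hc
    have heq : Submodule.map (LinearMap.toSpanSingleton R ↥X x) (Submodule.span R {c}) =
        LinearMap.range (LinearMap.toSpanSingleton R ↥X (c • x)) := by
      ext y
      constructor
      · rintro ⟨r, hr, rfl⟩
        obtain ⟨d, rfl⟩ := Submodule.mem_span_singleton.mp hr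
        refine ⟨d, ?_⟩
        show d • (c • x) = (d • c) • x
        rw [smul_smul, smul_eq_mul]
      · rintro ⟨d, rfl⟩
        refine ⟨d * c, Submodule.mem_span_singleton.mpr ⟨d, by rw [smul_eq_mul]⟩, ?_⟩
        show (d * c) • x = d • (c • x)
        rw [smul_smul]
    rw [heq]
    have hle : I ≤ LinearMap.ker (LinearMap.toSpanSingleton R ↥X (c • x)) := by
      intro r hr
      have hmem : r * c ∈ LinearMap.ker (LinearMap.toSpanSingleton R ↥X x) := by
        rw [hker]; exact I.mul_mem_right c hr
      have h1 : (r * c) • x = 0 := hmem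
      show r • (c • x) = 0
      rw [smul_smul, h1]
    have hamem : a ∈ LinearMap.ker (LinearMap.toSpanSingleton R ↥X (c • x)) := by
      have h1 : c • (a • x) = 0 := hc
      show a • (c • x) = 0
      rw [smul_smul, mul_comm a c, ← smul_smul, h1]
    have hlt' : LinearMap.ker (LinearMap.toSpanSingleton R ↥X (c • x)) > I :=
      lt_of_le_of_ne hle (fun he => ha (by rw [he]; exact hamem))
    exact IH _ hlt' X hX (c • x) rfl
  have hJxC : ModuleCat.of R
      ↥(Submodule.map (LinearMap.toSpanSingleton R ↥X x) (J : Submodule R R)) ∈ C := by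
    obtain ⟨S, hS⟩ := IsNoetherian.noetherian (J : Submodule R R)
    have hgen : ∀ l : List R, (∀ c ∈ l, c ∈ J) →
        ModuleCat.of R ↥(Submodule.map (LinearMap.toSpanSingleton R ↥X x)
          (Submodule.span R {c | c ∈ l})) ∈ C := by
      intro l
      induction l with
      | nil =>
        intro _
        refine cBot hC him hext ?_
        have h0 : ({c | c ∈ ([] : List R)} : Set R) = ∅ := by simp
        rw [h0, Submodule.span_empty, Submodule.map_bot]
      | cons c l ihl =>
        intro hcl
        have hins : ({v | v ∈ c :: l} : Set R) = insert c {v | v ∈ l} := by ext w; simp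
        have h1 : Submodule.map (LinearMap.toSpanSingleton R ↥X x) (Submodule.span R {v | v ∈ c :: l}) =
            Submodule.map (LinearMap.toSpanSingleton R ↥X x) (Submodule.span R {c}) ⊔
              Submodule.map (LinearMap.toSpanSingleton R ↥X x) (Submodule.span R {v | v ∈ l}) := by
          rw [hins, Submodule.span_insert, Submodule.map_sup]
        rw [h1]
        exact cSup hC him hext hX (hcyc c (hcl c (by simp)))
          (ihl (fun d hd => hcl d (by simp [hd])))
    have hSl : ({c | c ∈ S.toList} : Set R) = ↑S := by ext w; simp [Finset.mem_toList]
    have hfin := hgen S.toList (fun c hc => by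
      rw [← hS]
      exact Submodule.subset_span (by simpa [Finset.mem_toList] using hc))
    rw [hSl, hS] at hfin
    exact hfin
  -- the extension `0 → Jx → Rx → R(ax) → 0`
  have hJxle : Submodule.map (LinearMap.toSpanSingleton R ↥X x) (J : Submodule R R) ≤
      LinearMap.range (LinearMap.toSpanSingleton R ↥X x) := by
    refine le_trans (Submodule.map_mono le_top) ?_
    rw [Submodule.map_top]
  have hmapg : ∀ w ∈ LinearMap.range (LinearMap.toSpanSingleton R ↥X x),
      a • w ∈ LinearMap.range (LinearMap.toSpanSingleton R ↥X (a • x)) := by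
    rintro w ⟨r, rfl⟩
    refine ⟨r, ?_⟩
    show r • (a • x) = a • (r • x)
    rw [smul_smul, smul_smul, mul_comm]
  set f : ↥(Submodule.map (LinearMap.toSpanSingleton R ↥X x) (J : Submodule R R)) →ₗ[R]
      ↥(LinearMap.range (LinearMap.toSpanSingleton R ↥X x)) := Submodule.inclusion hJxle with hf
  set g : ↥(LinearMap.range (LinearMap.toSpanSingleton R ↥X x)) →ₗ[R]
      ↥(LinearMap.range (LinearMap.toSpanSingleton R ↥X (a • x))) :=
    (LinearMap.lsmul R ↥X a).restrict
      (p := LinearMap.range (LinearMap.toSpanSingleton R ↥X x))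
      (q := LinearMap.range (LinearMap.toSpanSingleton R ↥X (a • x)))
      (fun w hw => hmapg w hw) with hg
  have hfinj : Function.Injective f := Submodule.inclusion_injective hJxle
  have hgsurj : Function.Surjective g := by
    rintro ⟨y, hy⟩
    obtain ⟨r, rfl⟩ := hy
    refine ⟨⟨r • x, ⟨r, rfl⟩⟩, ?_⟩
    apply Subtype.ext
    show a • (r • x) = r • (a • x)
    rw [smul_smul, smul_smul, mul_comm]
  have hexact : LinearMap.range f = LinearMap.ker g := by
    ext ⟨w, hw⟩
    constructor
    · rintro ⟨⟨j, hj⟩, hfj⟩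
      have hwj : w = j := (congrArg Subtype.val hfj).symm
      rw [LinearMap.mem_ker]
      apply Subtype.ext
      show a • w = 0
      rw [hwj]
      obtain ⟨r, hrJ, rfl⟩ := hj
      have h1 : r • (a • x) = 0 := hrJ
      show a • (r • x) = 0
      rw [smul_smul, mul_comm a r, ← smul_smul, h1]
    · intro hkg
      rw [LinearMap.mem_ker] at hkg
      have h1 : a • w = 0 := congrArg Subtype.val hkg
      obtain ⟨r, rfl⟩ := hw
      have h2 : r ∈ J := by
        show r • (a • x) = 0
        have h3 : a • (r • x) = 0 := h1
        rw [smul_smul, mul_comm r a, ← smul_smul, h3]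
      exact ⟨⟨(LinearMap.toSpanSingleton R ↥X x) r, Submodule.mem_map_of_mem h2⟩, rfl⟩
  haveI : Module.Finite R ↥(LinearMap.range (LinearMap.toSpanSingleton R ↥X x)) :=
    Module.Finite.iff_fg.mpr (IsNoetherian.noetherian _)
  exact cExt hC him hext hJxC hax f g hfinj hgsurj hexact

end Main

end IETF

theorem ie_closed_is_torsionFree (R : Type u) [CommRing R] [IsNoetherianRing R]
    (C : Set (ModuleCat.{u} R)) (hC : IsModSubcat R C)
    (him : ImagesClosed R C) (hext : ExtClosed R C) :
    SubmoduleClosed R C ∧ ExtClosed R C := by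
  refine ⟨?_, hext⟩
  intro M hM N
  haveI : Module.Finite R ↥M := hC.2.2 M hM
  haveI : IsNoetherian R ↥M := isNoetherian_of_isNoetherianRing_of_finite R ↥M
  obtain ⟨S, hS⟩ := IsNoetherian.noetherian N
  have hgen : ∀ l : List ↥M, ModuleCat.of R ↥(Submodule.span R {v | v ∈ l}) ∈ C := by
    intro l
    induction l with
    | nil =>
      refine IETF.cBot hC him hext ?_
      have h0 : ({v | v ∈ ([] : List ↥M)} : Set ↥M) = ∅ := by simp
      rw [h0, Submodule.span_empty]
    | cons a l ihl =>
      have hins : ({v | v ∈ a :: l} : Set ↥M) = insert a {v | v ∈ l} := by ext w; simp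
      have h1 : Submodule.span R {v | v ∈ a :: l} =
          Submodule.span R {a} ⊔ Submodule.span R {v | v ∈ l} := by
        rw [hins, Submodule.span_insert]
      rw [h1]
      have hcyc : ModuleCat.of R ↥(Submodule.span R {a}) ∈ C := by
        have := IETF.cyclic_mem hC him hext M hM a
        rw [LinearMap.span_singleton_eq_range]
        exact this
      exact IETF.cSup hC him hext hM hcyc ihl
  have hSl : ({v | v ∈ S.toList} : Set ↥M) = ↑S := by ext w; simp [Finset.mem_toList]
  have := hgen S.toList
  rw [hSl, hS] at this
  exact this
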